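/- arXiv:math/0311280 — 3 statements merged into one kernel-verified Lean document; each statement's English description precedes it below -/
import Mathlib

section
/- Let ε ≥ 0 be a real number. For any complex ν with |Im(ν)| ≤ ε and any complex z with Re(z) > 2ε², the principal-branch square root satisfies Re(√(2z + ν²)) > |Re(ν)|. -/
theorem re_sqrt_gt_abs_re (ε : ℝ) (hε : 0 ≤ ε) (ν z : ℂ)
    (hν : |ν.im| ≤ ε) (hz : 2 * ε ^ 2 < z.re) :
    |ν.re| < ((2 * z + ν ^ 2) ^ ((1 : ℂ) / 2)).re := by
  have h1 : (1 : ℂ) / 2 = (2⁻¹ : ℂ) := by norm_num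
  rw [h1, Complex.cpow_inv_two_re]
  have him : ν.im ^ 2 ≤ ε ^ 2 := by
    have := sq_abs ν.im
    nlinarith [abs_nonneg ν.im]
  have hre : ν.re ^ 2 < (2 * z + ν ^ 2).re := by
    simp [Complex.add_re, Complex.mul_re, Complex.sq_norm, pow_two, Complex.mul_im]
    nlinarith
  have habs : (2 * z + ν ^ 2).re ≤ ‖2 * z + ν ^ 2‖ := Complex.re_le_norm _
  have : ν.re ^ 2 < (‖2 * z + ν ^ 2‖ + (2 * z + ν ^ 2).re) / 2 := by linarith
  calc |ν.re| = Real.sqrt (ν.re ^ 2) := (Real.sqrt_sq_eq_abs _).symm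
    _ < _ := Real.sqrt_lt_sqrt (sq_nonneg _) this
end

section
/- Let ε ≥ 0, a > 0 be real, ν complex with |Im(ν)| ≤ ε, and z complex with Re(z) > 2ε². Then the integral D_ν(a,z) = (e^{-1/(2a)}/a) ∫_0^∞ e^{-x²/(2a)} x^{ν+3} I_μ(x/a) dx, with μ = √(2z+ν²) (principal branch), is finite (absolutely convergent). -/
open MeasureTheory

/-- Modified Bessel function of the first kind of complex order `μ`,
defined by its series for positive real arguments. -/
noncomputable def besselI (μ : ℂ) (ξ : ℝ) : ℂ :=
  ∑' n : ℕ, ((ξ : ℂ) / 2) ^ (μ + 2 * (n : ℂ)) /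
    ((n.factorial : ℂ) * Complex.Gamma (μ + 1 + (n : ℂ)))

namespace WeberAux

open Complex Real

lemma measurable_cpow_const (w : ℂ) : Measurable fun z : ℂ => z ^ w := by
  have h : (fun z : ℂ => z ^ w) = fun z =>
      if z = 0 then (if w = 0 then 1 else 0) else Complex.exp (Complex.log z * w) := by
    funext z; rw [Complex.cpow_def]
  rw [h]
  exact Measurable.ite (measurableSet_eq) measurable_const
    (Complex.measurable_exp.comp (Complex.measurable_log.mul_const w))

lemma gamma_lb {μ : ℂ} (hμ : 0 < μ.re) (n : ℕ) :
    ‖Complex.Gamma (μ + 1)‖ * n.factorial ≤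
      ‖Complex.Gamma (μ + 1 + n)‖ := by
  induction n with
  | zero => simp
  | succ n ih =>
    have hre : (μ + 1 + (n : ℂ)).re = μ.re + 1 + n := by
      simp [Complex.add_re]
    have hne : (μ + 1 + (n : ℂ)) ≠ 0 := by
      intro h
      rw [h] at hre
      simp at hre
      have : (0:ℝ) ≤ (n:ℝ) := Nat.cast_nonneg n
      linarith
    have hcast : μ + 1 + ((n + 1 : ℕ) : ℂ) = (μ + 1 + (n : ℂ)) + 1 := by
      push_cast; ring
    rw [hcast, Complex.Gamma_add_one _ hne, norm_mul]
    have habs : (n : ℝ) + 1 ≤ ‖μ + 1 + (n : ℂ)‖ := by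
      calc (n : ℝ) + 1 ≤ μ.re + 1 + n := by linarith
        _ = (μ + 1 + (n : ℂ)).re := hre.symm
        _ ≤ ‖μ + 1 + (n : ℂ)‖ := Complex.re_le_norm _
    calc ‖Complex.Gamma (μ + 1)‖ * (n + 1).factorial
        = ((n:ℝ) + 1) * (‖Complex.Gamma (μ + 1)‖ * n.factorial) := by
          rw [Nat.factorial_succ]; push_cast; ring
      _ ≤ ‖μ + 1 + (n : ℂ)‖ * ‖Complex.Gamma (μ + 1 + (n : ℂ))‖ := by
          apply mul_le_mul habs ih (by positivity) (norm_nonneg _)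

lemma fact_ineq (n : ℕ) : ((2 * n).factorial : ℝ) ≤ 4 ^ n * (n.factorial * n.factorial) := by
  have h1 : (2 * n).choose n ≤ 2 ^ (2 * n) := by
    calc (2 * n).choose n ≤ ∑ m ∈ Finset.range (2 * n + 1), (2 * n).choose m :=
          Finset.single_le_sum (fun i _ => Nat.zero_le _) (Finset.mem_range.mpr (by omega))
      _ = 2 ^ (2 * n) := Nat.sum_range_choose _
  have h2 : (2 * n).choose n * n.factorial * n.factorial = (2 * n).factorial := by
    have := Nat.choose_mul_factorial_mul_factorial (show n ≤ 2 * n by omega)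
    simpa [show 2 * n - n = n by omega] using this
  have h3 : (2 * n).factorial ≤ 2 ^ (2 * n) * (n.factorial * n.factorial) := by
    calc (2 * n).factorial = (2 * n).choose n * n.factorial * n.factorial := h2.symm
      _ ≤ 2 ^ (2 * n) * n.factorial * n.factorial :=
          Nat.mul_le_mul_right _ (Nat.mul_le_mul_right _ h1)
      _ = 2 ^ (2 * n) * (n.factorial * n.factorial) := by ring
  calc ((2 * n).factorial : ℝ) ≤ ((2 ^ (2 * n) * (n.factorial * n.factorial) : ℕ) : ℝ) := by
        exact_mod_cast h3
    _ = 4 ^ n * (n.factorial * n.factorial) := by push_cast [pow_mul]; norm_num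

lemma term_bound {μ : ℂ} (hμ : 0 < μ.re) (ξ : ℝ) (n : ℕ) :
    ‖((ξ : ℂ) / 2) ^ (μ + 2 * (n : ℂ)) / ((n.factorial : ℂ) * Complex.Gamma (μ + 1 + (n : ℂ)))‖ ≤
    (Real.exp (π * |μ.im|) / ‖Complex.Gamma (μ + 1)‖) * (|ξ| / 2) ^ μ.re *
      (|ξ| ^ (2 * n) / (2 * n).factorial) := by
  set G := ‖Complex.Gamma (μ + 1)‖ with hGdef
  have hG : 0 < G := norm_pos_iff.mpr (Complex.Gamma_ne_zero_of_re_pos (by simp; linarith))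
  set E := Real.exp (π * |μ.im|) with hEdef
  have hE : (1:ℝ) ≤ E := by
    rw [hEdef, ← Real.exp_zero]
    exact Real.exp_le_exp.mpr (by positivity)
  -- numerator bound
  have hre : (μ + 2 * (n : ℂ)).re = μ.re + 2 * n := by simp
  have him : (μ + 2 * (n : ℂ)).im = μ.im := by simp
  have habs2 : ‖(ξ : ℂ) / 2‖ = |ξ| / 2 := by
    rw [norm_div, Complex.norm_real, Real.norm_eq_abs, Complex.norm_two]
  have hnum : ‖((ξ : ℂ) / 2) ^ (μ + 2 * (n : ℂ))‖ ≤
      (|ξ| / 2) ^ (μ.re + 2 * n) * E := by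
    calc ‖((ξ : ℂ) / 2) ^ (μ + 2 * (n : ℂ))‖
        ≤ ‖(ξ : ℂ) / 2‖ ^ (μ + 2 * (n : ℂ)).re /
            Real.exp (Complex.arg ((ξ : ℂ) / 2) * (μ + 2 * (n : ℂ)).im) :=
          Complex.norm_cpow_le _ _
      _ = (|ξ| / 2) ^ (μ.re + 2 * n) *
            Real.exp (-(Complex.arg ((ξ : ℂ) / 2) * μ.im)) := by
          rw [habs2, hre, him, Real.exp_neg, div_eq_mul_inv]
      _ ≤ (|ξ| / 2) ^ (μ.re + 2 * n) * E := by
          apply mul_le_mul_of_nonneg_left _ (by positivity)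
          rw [hEdef]
          apply Real.exp_le_exp.mpr
          calc -(Complex.arg ((ξ : ℂ) / 2) * μ.im) ≤ |Complex.arg ((ξ : ℂ) / 2) * μ.im| :=
                neg_le_abs _
            _ = |Complex.arg ((ξ : ℂ) / 2)| * |μ.im| := abs_mul _ _
            _ ≤ π * |μ.im| :=
                mul_le_mul_of_nonneg_right (Complex.abs_arg_le_pi _) (abs_nonneg _)
  -- denominator bound
  have hden : (n.factorial : ℝ) * (G * n.factorial) ≤
      ‖(n.factorial : ℂ) * Complex.Gamma (μ + 1 + (n : ℂ))‖ := by
    rw [norm_mul]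
    have : ‖((n.factorial : ℕ) : ℂ)‖ = (n.factorial : ℝ) := by
      rw [Complex.norm_natCast]
    rw [this]
    exact mul_le_mul_of_nonneg_left (gamma_lb hμ n) (by positivity)
  have hdenpos : (0:ℝ) < (n.factorial : ℝ) * (G * n.factorial) := by positivity
  -- combine
  have hmain : ‖((ξ : ℂ) / 2) ^ (μ + 2 * (n : ℂ)) /
      ((n.factorial : ℂ) * Complex.Gamma (μ + 1 + (n : ℂ)))‖ ≤
      ((|ξ| / 2) ^ (μ.re + 2 * n) * E) / ((n.factorial : ℝ) * (G * n.factorial)) := by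
    rw [norm_div]
    apply div_le_div₀ (by positivity) _ hdenpos hden
    exact hnum
  refine hmain.trans ?_
  -- algebraic rearrangement
  have hrsplit : (|ξ| / 2) ^ (μ.re + 2 * n) = (|ξ| / 2) ^ μ.re * (|ξ| / 2) ^ (2 * n : ℕ) := by
    rw [Real.rpow_add' (by positivity) (by positivity),
      show (2 * (n:ℝ)) = ((2*n : ℕ) : ℝ) by push_cast; ring, Real.rpow_natCast]
  rw [hrsplit]
  have h4 : (|ξ| / 2) ^ (2 * n : ℕ) = |ξ| ^ (2 * n) / 4 ^ n := by
    rw [div_pow]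
    congr 1
    rw [pow_mul]
    norm_num
  rw [h4]
  have hfinal : (|ξ| / 2) ^ μ.re * (|ξ| ^ (2 * n) / 4 ^ n) * E /
        ((n.factorial : ℝ) * (G * n.factorial))
      = (E / G * (|ξ| / 2) ^ μ.re) *
          (|ξ| ^ (2 * n) / (4 ^ n * (n.factorial * n.factorial))) := by
    field_simp
  rw [hfinal]
  gcongr
  exact fact_ineq n

lemma summable_aux (c : ℝ) : Summable (fun n : ℕ => c ^ (2 * n) / (2 * n).factorial) := by
  have h := (Real.summable_pow_div_factorial c).comp_injective
    (fun m n h => by simpa using h : Function.Injective fun n : ℕ => 2 * n)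
  exact h

lemma summable_term {μ : ℂ} (hμ : 0 < μ.re) (ξ : ℝ) :
    Summable (fun n : ℕ => ‖((ξ : ℂ) / 2) ^ (μ + 2 * (n : ℂ)) /
      ((n.factorial : ℂ) * Complex.Gamma (μ + 1 + (n : ℂ)))‖) := by
  apply Summable.of_nonneg_of_le (fun n => norm_nonneg _) (term_bound hμ ξ)
  exact (summable_aux |ξ|).mul_left _

lemma besselI_bound {μ : ℂ} (hμ : 0 < μ.re) (ξ : ℝ) :
    ‖besselI μ ξ‖ ≤ (Real.exp (π * |μ.im|) / ‖Complex.Gamma (μ + 1)‖) *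
      (|ξ| / 2) ^ μ.re * Real.exp |ξ| := by
  have hsum := summable_term hμ ξ
  have h1 : ‖besselI μ ξ‖ ≤ ∑' n : ℕ, ‖((ξ : ℂ) / 2) ^ (μ + 2 * (n : ℂ)) /
      ((n.factorial : ℂ) * Complex.Gamma (μ + 1 + (n : ℂ)))‖ := norm_tsum_le_tsum_norm hsum
  have h2 : (∑' n : ℕ, ‖((ξ : ℂ) / 2) ^ (μ + 2 * (n : ℂ)) /
      ((n.factorial : ℂ) * Complex.Gamma (μ + 1 + (n : ℂ)))‖) ≤
      ∑' n : ℕ, (Real.exp (π * |μ.im|) / ‖Complex.Gamma (μ + 1)‖) *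
        (|ξ| / 2) ^ μ.re * (|ξ| ^ (2 * n) / (2 * n).factorial) :=
    Summable.tsum_le_tsum (term_bound hμ ξ) hsum ((summable_aux |ξ|).mul_left _)
  have h3 : (∑' n : ℕ, (Real.exp (π * |μ.im|) / ‖Complex.Gamma (μ + 1)‖) *
        (|ξ| / 2) ^ μ.re * (|ξ| ^ (2 * n) / (2 * n).factorial))
      = (Real.exp (π * |μ.im|) / ‖Complex.Gamma (μ + 1)‖) * (|ξ| / 2) ^ μ.re *
        ∑' n : ℕ, (|ξ| ^ (2 * n) / (2 * n).factorial) := tsum_mul_left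
  have h4 : (∑' n : ℕ, (|ξ| ^ (2 * n) / (2 * n).factorial)) ≤ Real.exp |ξ| := by
    have hexp : Real.exp |ξ| = ∑' n : ℕ, |ξ| ^ n / n.factorial := by
      rw [Real.exp_eq_exp_ℝ, NormedSpace.exp_eq_tsum_div]
    rw [hexp]
    exact Summable.tsum_le_tsum_of_inj (fun n : ℕ => 2 * n) (fun m n h => by simpa using h)
      (fun c _ => by positivity) (fun n => le_rfl) (summable_aux |ξ|)
      (Real.summable_pow_div_factorial |ξ|)
  calc ‖besselI μ ξ‖ ≤ _ := h1
    _ ≤ _ := h2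
    _ = _ := h3
    _ ≤ _ := by
        apply mul_le_mul_of_nonneg_left h4 (by positivity)

lemma measurable_besselI {μ : ℂ} (hμ : 0 < μ.re) : Measurable (besselI μ) := by
  refine measurable_of_tendsto_metrizable
    (f := fun (N : ℕ) (ξ : ℝ) => ∑ n ∈ Finset.range N, ((ξ : ℂ) / 2) ^ (μ + 2 * (n : ℂ)) /
      ((n.factorial : ℂ) * Complex.Gamma (μ + 1 + (n : ℂ)))) (g := besselI μ) (fun N => ?_) ?_
  · apply Finset.measurable_sum
    intro n _
    exact ((measurable_cpow_const _).comp (Complex.measurable_ofReal.div_const 2)).div_const _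
  · rw [tendsto_pi_nhds]
    intro ξ
    exact ((summable_term hμ ξ).of_norm).hasSum.tendsto_sum_nat

end WeberAux

open Complex Real in
theorem integrable_weber_integrand (ε a : ℝ) (hε : 0 ≤ ε) (ha : 0 < a)
    (ν z : ℂ) (hν : |ν.im| ≤ ε) (hz : 2 * ε ^ 2 < z.re) :
    IntegrableOn
      (fun x : ℝ => (Real.exp (-x ^ 2 / (2 * a)) : ℂ) * (x : ℂ) ^ (ν + 3) *
        besselI ((2 * z + ν ^ 2) ^ ((1 : ℂ) / 2)) (x / a))
      (Set.Ioi 0) := by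
  set μ : ℂ := (2 * z + ν ^ 2) ^ ((1 : ℂ) / 2) with hμdef
  -- basic real-part estimates
  have him2 : ν.im ^ 2 ≤ ε ^ 2 := by
    have := mul_self_le_mul_self (abs_nonneg ν.im) hν
    simpa [← sq, sq_abs] using this
  have hwre : ν.re ^ 2 < (2 * z + ν ^ 2).re := by
    have hre : (2 * z + ν ^ 2).re = 2 * z.re + (ν.re ^ 2 - ν.im ^ 2) := by
      simp [Complex.add_re, Complex.mul_re, sq]
    rw [hre]
    nlinarith
  have hwrepos : 0 < (2 * z + ν ^ 2).re := lt_of_le_of_lt (sq_nonneg _) hwre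
  have hw0 : (2 * z + ν ^ 2) ≠ 0 := by
    intro h
    rw [h] at hwrepos
    simp at hwrepos
  -- μ squared
  have hμsq : μ ^ 2 = 2 * z + ν ^ 2 := by
    rw [hμdef, show ((1 : ℂ) / 2) = ((2 : ℂ))⁻¹ by norm_num]
    exact Complex.cpow_ofNat_inv_pow _ 2
  -- positivity of μ.re
  have hμre : 0 < μ.re := by
    rw [hμdef, Complex.cpow_def_of_ne_zero hw0, Complex.exp_re]
    apply mul_pos (Real.exp_pos _)
    apply Real.cos_pos_of_mem_Ioo
    have him : (Complex.log (2 * z + ν ^ 2) * (1 / 2)).im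
        = Complex.arg (2 * z + ν ^ 2) / 2 := by
      simp [Complex.mul_im, Complex.log_im]
      ring
    rw [him]
    have harg : |Complex.arg (2 * z + ν ^ 2)| < π / 2 :=
      Complex.abs_arg_lt_pi_div_two_iff.mpr (Or.inl hwrepos)
    rw [abs_lt] at harg
    constructor <;> [linarith [Real.pi_pos]; linarith [Real.pi_pos]]
  -- key: |ν.re| < μ.re
  have hkey : |ν.re| < μ.re := by
    have h1 : μ.re ^ 2 - μ.im ^ 2 = (2 * z + ν ^ 2).re := by
      rw [← hμsq]
      simp [sq, Complex.mul_re]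
    have h2 : ν.re ^ 2 < μ.re ^ 2 := by nlinarith [sq_nonneg μ.im]
    have h3 : |ν.re| ^ 2 < μ.re ^ 2 := by rwa [_root_.sq_abs]
    exact lt_of_pow_lt_pow_left₀ 2 hμre.le h3
  -- constants
  set G := ‖Complex.Gamma (μ + 1)‖ with hGdef
  have hG : 0 < G :=
    norm_pos_iff.mpr (Complex.Gamma_ne_zero_of_re_pos (by simp [Complex.add_re]; linarith))
  set C : ℝ := Real.exp (π * |μ.im|) / G with hCdef
  have hC : 0 < C := by positivity
  set p : ℝ := ν.re + 3 + μ.re with hpdef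
  have hp : (-1 : ℝ) < p := by
    have := neg_abs_le ν.re
    rw [hpdef]; linarith
  set C' : ℝ := C * (2 * a)⁻¹ ^ μ.re * Real.exp a⁻¹ with hC'def
  -- integrable dominating function
  have hgint : IntegrableOn
      (fun x : ℝ => C' * (x ^ p * Real.exp (-(1 / (4 * a)) * x ^ 2))) (Set.Ioi 0) := by
    exact ((integrable_rpow_mul_exp_neg_mul_sq (by positivity) hp).const_mul C').integrableOn
  apply Integrable.mono' hgint
  · -- measurability
    apply Measurable.aestronglyMeasurable
    apply Measurable.mul
    apply Measurable.mul
    · exact Complex.measurable_ofReal.comp (by fun_prop)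
    · exact (WeberAux.measurable_cpow_const _).comp Complex.measurable_ofReal
    · exact (WeberAux.measurable_besselI hμre).comp (measurable_id.div_const a)
  · -- pointwise bound
    filter_upwards [ae_restrict_mem measurableSet_Ioi] with x hx
    have hx0 : (0 : ℝ) < x := hx
    have hxa : 0 < x / a := by positivity
    -- norms of factors
    have hn1 : ‖(Real.exp (-x ^ 2 / (2 * a)) : ℂ)‖ = Real.exp (-x ^ 2 / (2 * a)) := by
      rw [Complex.norm_real, Real.norm_eq_abs, abs_of_pos (Real.exp_pos _)]
    have hn2 : ‖(x : ℂ) ^ (ν + 3)‖ = x ^ (ν.re + 3) := by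
      rw [Complex.norm_cpow_eq_rpow_re_of_pos hx0]
      norm_num
    have hn3 : ‖besselI μ (x / a)‖ ≤ C * (x / a / 2) ^ μ.re * Real.exp (x / a) := by
      have := WeberAux.besselI_bound hμre (x / a)
      rwa [abs_of_pos hxa] at this
    calc ‖(Real.exp (-x ^ 2 / (2 * a)) : ℂ) * (x : ℂ) ^ (ν + 3) * besselI μ (x / a)‖
        = Real.exp (-x ^ 2 / (2 * a)) * x ^ (ν.re + 3) * ‖besselI μ (x / a)‖ := by
          rw [norm_mul, norm_mul, hn1, hn2]
      _ ≤ Real.exp (-x ^ 2 / (2 * a)) * x ^ (ν.re + 3) *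
            (C * (x / a / 2) ^ μ.re * Real.exp (x / a)) := by
          exact mul_le_mul_of_nonneg_left hn3 (mul_nonneg (Real.exp_pos _).le (Real.rpow_nonneg hx0.le _))
      _ ≤ C' * (x ^ p * Real.exp (-(1 / (4 * a)) * x ^ 2)) := by
          have hsplit : (x / a / 2) ^ μ.re = x ^ μ.re * (2 * a)⁻¹ ^ μ.re := by
            rw [show x / a / 2 = x * (2 * a)⁻¹ by rw [div_div, div_eq_mul_inv, mul_comm a 2],
              Real.mul_rpow hx0.le (by positivity)]
          have hxp : x ^ (ν.re + 3) * x ^ μ.re = x ^ p := by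
            rw [← Real.rpow_add hx0, hpdef]
          have hexp : Real.exp (-x ^ 2 / (2 * a)) * Real.exp (x / a) ≤
              Real.exp a⁻¹ * Real.exp (-(1 / (4 * a)) * x ^ 2) := by
            rw [← Real.exp_add, ← Real.exp_add]
            apply Real.exp_le_exp.mpr
            have hid : (x - 2) ^ 2 / (4 * a) = x ^ 2 / (4 * a) - x / a + a⁻¹ := by
              field_simp
              ring
            have hnn : 0 ≤ (x - 2) ^ 2 / (4 * a) := by positivity
            have hid2 : -x ^ 2 / (2 * a) + x ^ 2 / (4 * a) = -(1 / (4 * a)) * x ^ 2 := by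
              field_simp
              ring
            nlinarith
          calc Real.exp (-x ^ 2 / (2 * a)) * x ^ (ν.re + 3) *
                (C * (x / a / 2) ^ μ.re * Real.exp (x / a))
              = (C * (2 * a)⁻¹ ^ μ.re) * (x ^ (ν.re + 3) * x ^ μ.re) *
                  (Real.exp (-x ^ 2 / (2 * a)) * Real.exp (x / a)) := by
                rw [hsplit]; ring
            _ ≤ (C * (2 * a)⁻¹ ^ μ.re) * (x ^ (ν.re + 3) * x ^ μ.re) *
                  (Real.exp a⁻¹ * Real.exp (-(1 / (4 * a)) * x ^ 2)) := by
                apply mul_le_mul_of_nonneg_left hexp (by positivity)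
            _ = C' * (x ^ p * Real.exp (-(1 / (4 * a)) * x ^ 2)) := by
                rw [hxp, hC'def]; ring
end

section
/- For any x > 0, a > 0, and complex ν, the extension L(x,ν) of ν ↦ E[(A^{(ν)}_x - a)^+] satisfies the bound |L(x,ν)| ≤ e^{(x/2)·Im(ν)²} · E[A^{(Re ν)}_x]. -/
open MeasureTheory ProbabilityTheory
open scoped NNReal ENNReal

/-- A standard Brownian motion: jointly measurable, starts at `0`, has centered Gaussian
increments of the correct variance, independent increments, and continuous paths. -/
structure IsBrownianMotion {Ω : Type*} [MeasurableSpace Ω] (P : Measure Ω)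
    (W : ℝ → Ω → ℝ) : Prop where
  measurable : Measurable fun p : ℝ × Ω => W p.1 p.2
  init : ∀ᵐ ω ∂P, W 0 ω = 0
  incr_law : ∀ s t : ℝ, 0 ≤ s → s ≤ t →
    P.map (fun ω => W t ω - W s ω) = gaussianReal 0 (Real.toNNReal (t - s))
  indep_incr : ∀ (n : ℕ) (t : Fin (n + 1) → ℝ), Monotone t →
    iIndepFun
      (fun i : Fin n => fun ω => W (t i.succ) ω - W (t i.castSucc) ω) P
  cont : ∀ᵐ ω ∂P, Continuous fun u : ℝ => W u ω

lemma aux_pdf_mul_exp (c : ℝ) {v : ℝ≥0} (hv : v ≠ 0) (y : ℝ) :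
    gaussianPDFReal 0 v y * Real.exp (c * y)
      = Real.exp (c ^ 2 * v / 2) * gaussianPDFReal (c * v) v y := by
  have hv' : (0 : ℝ) < v := lt_of_le_of_ne v.coe_nonneg (by exact_mod_cast hv.symm)
  simp only [gaussianPDFReal, sub_zero]
  rw [mul_assoc, ← Real.exp_add, mul_left_comm, ← Real.exp_add]
  congr 1
  field_simp
  ring

lemma aux_mgf_gaussianReal (c : ℝ) (v : ℝ≥0) :
    ∫⁻ y, ENNReal.ofReal (Real.exp (c * y)) ∂(gaussianReal 0 v)
      = ENNReal.ofReal (Real.exp (c ^ 2 * v / 2)) := by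
  by_cases hv : v = 0
  · subst hv
    rw [gaussianReal_zero_var, lintegral_dirac]
    simp
  · have hmeas : Measurable fun y : ℝ => ENNReal.ofReal (Real.exp (c * y)) :=
      (Real.measurable_exp.comp (measurable_id.const_mul c)).ennreal_ofReal
    rw [gaussianReal_of_var_ne_zero 0 hv,
      lintegral_withDensity_eq_lintegral_mul _ (measurable_gaussianPDF 0 v) hmeas]
    have hint : Integrable (fun y => gaussianPDFReal 0 v y * Real.exp (c * y)) := by
      have := (integrable_gaussianPDFReal (c * v) v).const_mul (Real.exp (c ^ 2 * v / 2))
      exact this.congr (by filter_upwards with y using (aux_pdf_mul_exp c hv y).symm)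
    have hnn : 0 ≤ᵐ[volume] fun y => gaussianPDFReal 0 v y * Real.exp (c * y) := by
      filter_upwards with y
      exact mul_nonneg (gaussianPDFReal_nonneg 0 v y) (Real.exp_nonneg _)
    calc ∫⁻ y, (gaussianPDF 0 v * fun y => ENNReal.ofReal (Real.exp (c * y))) y
        = ∫⁻ y, ENNReal.ofReal (gaussianPDFReal 0 v y * Real.exp (c * y)) := by
          refine lintegral_congr fun y => ?_
          simp only [Pi.mul_apply, gaussianPDF]
          rw [ENNReal.ofReal_mul (gaussianPDFReal_nonneg 0 v y)]
      _ = ENNReal.ofReal (∫ y, gaussianPDFReal 0 v y * Real.exp (c * y)) :=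
          (ofReal_integral_eq_lintegral_ofReal hint hnn).symm
      _ = ENNReal.ofReal (Real.exp (c ^ 2 * v / 2)) := by
          congr 1
          simp_rw [aux_pdf_mul_exp c hv]
          rw [integral_const_mul, integral_gaussianPDFReal_eq_one (c * v) hv, mul_one]

lemma aux_incr_lintegral {Ω : Type*} [MeasurableSpace Ω] (P : Measure Ω)
    (W : ℝ → Ω → ℝ) (hW : IsBrownianMotion P W) {s t : ℝ} (hs : 0 ≤ s) (hst : s ≤ t) (c : ℝ) :
    ∫⁻ ω, ENNReal.ofReal (Real.exp (c * (W t ω - W s ω))) ∂P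
      = ENNReal.ofReal (Real.exp (c ^ 2 * (t - s) / 2)) := by
  have Wm : ∀ u : ℝ, Measurable fun ω => W u ω := fun u =>
    hW.measurable.comp (measurable_const.prodMk measurable_id)
  have hm : Measurable fun ω => W t ω - W s ω := (Wm t).sub (Wm s)
  have hmeas : Measurable fun y : ℝ => ENNReal.ofReal (Real.exp (c * y)) :=
    (Real.measurable_exp.comp (measurable_id.const_mul c)).ennreal_ofReal
  calc ∫⁻ ω, ENNReal.ofReal (Real.exp (c * (W t ω - W s ω))) ∂P
      = ∫⁻ y, ENNReal.ofReal (Real.exp (c * y)) ∂(P.map fun ω => W t ω - W s ω) :=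
        (lintegral_map hmeas hm).symm
    _ = ENNReal.ofReal (Real.exp (c ^ 2 * (t - s) / 2)) := by
        rw [hW.incr_law s t hs hst, aux_mgf_gaussianReal,
          Real.coe_toNNReal _ (sub_nonneg.2 hst)]

lemma aux_swap {Ω : Type*} [MeasurableSpace Ω] (P : Measure Ω) [SigmaFinite P]
    (s : Set ℝ) (g : ℝ → Ω → ℝ≥0∞) (hg : Measurable fun p : Ω × ℝ => g p.2 p.1) :
    ∫⁻ ω, (∫⁻ w in s, g w ω) ∂P = ∫⁻ w in s, (∫⁻ ω, g w ω ∂P) := by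
  exact lintegral_lintegral_swap (μ := P) (ν := volume.restrict s)
    (f := fun ω w => g w ω) hg.aemeasurable

set_option maxHeartbeats 4000000 in
theorem bound_on_extension_L
    {Ω : Type*} [MeasurableSpace Ω] (P : Measure Ω) [IsProbabilityMeasure P]
    (W : ℝ → Ω → ℝ) (hW : IsBrownianMotion P W)
    (a x : ℝ) (ha : 0 < a) (hx : 0 < x) (ν : ℂ) :
    ‖Complex.exp (-(x : ℂ) * ν ^ 2 / 2) *
        ∫ ω, ((max ((∫ w in Set.Ioc (0:ℝ) x, Real.exp (2 * W w ω)) - a) 0 : ℝ) : ℂ) *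
          Complex.exp (ν * (W x ω : ℂ)) ∂P‖
      ≤ Real.exp ((x / 2) * ν.im ^ 2) *
          ∫ ω, (∫ w in Set.Ioc (0:ℝ) x, Real.exp (2 * (W w ω + ν.re * w))) ∂P := by
  set r : ℝ := ν.re with hr
  have Wm : ∀ u : ℝ, Measurable fun ω => W u ω := fun u =>
    hW.measurable.comp (measurable_const.prodMk measurable_id)
  set N : Ω → ℝ := fun ω => ∫ w in Set.Ioc (0:ℝ) x, Real.exp (2 * W w ω) with hN
  set C2 : ℝ≥0∞ := ∫⁻ w in Set.Ioc (0:ℝ) x, ENNReal.ofReal (Real.exp (2 * w + 2 * r * w))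
    with hC2
  -- nonnegativity of N
  have hNnn : ∀ ω, 0 ≤ N ω := fun ω => integral_nonneg fun w => Real.exp_nonneg _
  -- measurability of N
  have hNm : StronglyMeasurable N := by
    have : Measurable fun p : Ω × ℝ => Real.exp (2 * W p.2 p.1) :=
      (((hW.measurable.comp measurable_swap).const_mul 2).exp)
    exact this.stronglyMeasurable.integral_prod_right'
  -- per-w Gaussian computations
  have hG : ∀ w ∈ Set.Ioc (0:ℝ) x,
      ∫⁻ ω, ENNReal.ofReal (Real.exp (2 * W w ω + r * W x ω)) ∂P
        = ENNReal.ofReal (Real.exp (r ^ 2 * x / 2 + (2 * w + 2 * r * w))) := by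
    rintro w ⟨hw0, hwx⟩
    have hmono : Monotone ![0, w, x] := by
      intro i j hij
      fin_cases i <;> fin_cases j <;>
        simp_all [Fin.le_def, Matrix.cons_val_zero, Matrix.cons_val_one] <;> linarith
    have hind := hW.indep_incr 2 ![0, w, x] hmono
    have h01 : IndepFun (fun ω => W w ω - W 0 ω) (fun ω => W x ω - W w ω) P := by
      have h := hind.indepFun (i := 0) (j := 1) (by decide)
      simpa [Fin.succ, Fin.castSucc] using h
    have hIF : IndepFun
        (fun ω => ENNReal.ofReal (Real.exp ((2 + r) * (W w ω - W 0 ω))))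
        (fun ω => ENNReal.ofReal (Real.exp (r * (W x ω - W w ω)))) P := by
      exact h01.comp ((Real.measurable_exp.comp (measurable_id.const_mul (2 + r))).ennreal_ofReal)
        ((Real.measurable_exp.comp (measurable_id.const_mul r)).ennreal_ofReal)
    have hm1 : Measurable fun ω => ENNReal.ofReal (Real.exp ((2 + r) * (W w ω - W 0 ω))) :=
      ((((Wm w).sub (Wm 0)).const_mul (2 + r)).exp).ennreal_ofReal
    have hm2 : Measurable fun ω => ENNReal.ofReal (Real.exp (r * (W x ω - W w ω))) :=
      ((((Wm x).sub (Wm w)).const_mul r).exp).ennreal_ofReal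
    calc ∫⁻ ω, ENNReal.ofReal (Real.exp (2 * W w ω + r * W x ω)) ∂P
        = ∫⁻ ω, ENNReal.ofReal (Real.exp ((2 + r) * (W w ω - W 0 ω)))
            * ENNReal.ofReal (Real.exp (r * (W x ω - W w ω))) ∂P := by
          refine lintegral_congr_ae ?_
          filter_upwards [hW.init] with ω h0
          rw [← ENNReal.ofReal_mul (Real.exp_nonneg _), ← Real.exp_add, h0]
          congr 2
          ring
      _ = (∫⁻ ω, ENNReal.ofReal (Real.exp ((2 + r) * (W w ω - W 0 ω))) ∂P)
            * ∫⁻ ω, ENNReal.ofReal (Real.exp (r * (W x ω - W w ω))) ∂P :=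
          lintegral_mul_eq_lintegral_mul_lintegral_of_indepFun''
            hm1.aemeasurable hm2.aemeasurable hIF
      _ = ENNReal.ofReal (Real.exp ((2 + r) ^ 2 * (w - 0) / 2))
            * ENNReal.ofReal (Real.exp (r ^ 2 * (x - w) / 2)) := by
          rw [aux_incr_lintegral P W hW le_rfl hw0.le (2 + r),
            aux_incr_lintegral P W hW hw0.le hwx r]
      _ = ENNReal.ofReal (Real.exp (r ^ 2 * x / 2 + (2 * w + 2 * r * w))) := by
          rw [← ENNReal.ofReal_mul (Real.exp_nonneg _), ← Real.exp_add]
          congr 2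
          ring
  have hF : ∀ w ∈ Set.Ioc (0:ℝ) x,
      ∫⁻ ω, ENNReal.ofReal (Real.exp (2 * (W w ω + r * w))) ∂P
        = ENNReal.ofReal (Real.exp (2 * w + 2 * r * w)) := by
    rintro w ⟨hw0, hwx⟩
    have hm1 : Measurable fun ω => ENNReal.ofReal (Real.exp (2 * (W w ω - W 0 ω))) :=
      ((((Wm w).sub (Wm 0)).const_mul 2).exp).ennreal_ofReal
    calc ∫⁻ ω, ENNReal.ofReal (Real.exp (2 * (W w ω + r * w))) ∂P
        = ∫⁻ ω, ENNReal.ofReal (Real.exp (2 * r * w))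
            * ENNReal.ofReal (Real.exp (2 * (W w ω - W 0 ω))) ∂P := by
          refine lintegral_congr_ae ?_
          filter_upwards [hW.init] with ω h0
          rw [← ENNReal.ofReal_mul (Real.exp_nonneg _), ← Real.exp_add, h0]
          congr 2
          ring
      _ = ENNReal.ofReal (Real.exp (2 * r * w))
            * ∫⁻ ω, ENNReal.ofReal (Real.exp (2 * (W w ω - W 0 ω))) ∂P :=
          lintegral_const_mul _ hm1
      _ = ENNReal.ofReal (Real.exp (2 * r * w))
            * ENNReal.ofReal (Real.exp (2 ^ 2 * (w - 0) / 2)) := by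
          rw [aux_incr_lintegral P W hW le_rfl hw0.le 2]
      _ = ENNReal.ofReal (Real.exp (2 * w + 2 * r * w)) := by
          rw [← ENNReal.ofReal_mul (Real.exp_nonneg _), ← Real.exp_add]
          congr 2
          ring
  -- C2 is finite
  have hC2top : C2 ≠ ⊤ := by
    have hle : C2 ≤ ENNReal.ofReal (Real.exp ((2 + 2 * |r|) * x)) * volume (Set.Ioc (0:ℝ) x) := by
      rw [hC2, ← setLIntegral_const]
      refine setLIntegral_mono (by fun_prop) fun w hw => ?_
      refine ENNReal.ofReal_le_ofReal (Real.exp_le_exp.2 ?_)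
      have h1 : 2 * w ≤ 2 * x := by nlinarith [hw.2]
      have h2 : 2 * r * w ≤ 2 * |r| * x := by
        calc 2 * r * w ≤ 2 * |r| * w := by
              have := le_abs_self r
              nlinarith [hw.1.le]
          _ ≤ 2 * |r| * x := by nlinarith [abs_nonneg r, hw.2]
      nlinarith
    refine ne_top_of_le_ne_top ?_ hle
    exact ENNReal.mul_ne_top ENNReal.ofReal_ne_top (by simp)
  -- Tonelli for the LHS kernel
  have hswapG :
      ∫⁻ ω, (∫⁻ w in Set.Ioc (0:ℝ) x,
          ENNReal.ofReal (Real.exp (2 * W w ω + r * W x ω))) ∂P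
        = ENNReal.ofReal (Real.exp (r ^ 2 * x / 2)) * C2 := by
    rw [aux_swap P _ (fun w ω => ENNReal.ofReal (Real.exp (2 * W w ω + r * W x ω)))
        (by
          have : Measurable fun p : Ω × ℝ => Real.exp (2 * W p.2 p.1 + r * W x p.1) :=
            (((hW.measurable.comp measurable_swap).const_mul 2).add
              (((Wm x).comp measurable_fst).const_mul r)).exp
          exact this.ennreal_ofReal)]
    rw [setLIntegral_congr_fun measurableSet_Ioc
        (fun w hw => hG w hw)]
    calc ∫⁻ w in Set.Ioc (0:ℝ) x,
            ENNReal.ofReal (Real.exp (r ^ 2 * x / 2 + (2 * w + 2 * r * w)))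
          = ∫⁻ w in Set.Ioc (0:ℝ) x, ENNReal.ofReal (Real.exp (r ^ 2 * x / 2))
              * ENNReal.ofReal (Real.exp (2 * w + 2 * r * w)) := by
            refine lintegral_congr fun w => ?_
            rw [← ENNReal.ofReal_mul (Real.exp_nonneg _), ← Real.exp_add]
        _ = ENNReal.ofReal (Real.exp (r ^ 2 * x / 2)) * C2 := by
            rw [hC2, lintegral_const_mul _ (by fun_prop :
              Measurable fun w : ℝ => ENNReal.ofReal (Real.exp (2 * w + 2 * r * w)))]
  -- Tonelli for the RHS kernel
  have hswapF :
      ∫⁻ ω, (∫⁻ w in Set.Ioc (0:ℝ) x,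
          ENNReal.ofReal (Real.exp (2 * (W w ω + r * w)))) ∂P = C2 := by
    rw [aux_swap P _ (fun w ω => ENNReal.ofReal (Real.exp (2 * (W w ω + r * w))))
        (by
          have : Measurable fun p : Ω × ℝ => Real.exp (2 * (W p.2 p.1 + r * p.2)) :=
            (((hW.measurable.comp measurable_swap).add
              ((measurable_snd).const_mul r)).const_mul 2).exp
          exact this.ennreal_ofReal)]
    exact setLIntegral_congr_fun measurableSet_Ioc
      (fun w hw => hF w hw)
  -- RHS value
  have hRHS : ∫ ω, (∫ w in Set.Ioc (0:ℝ) x, Real.exp (2 * (W w ω + r * w))) ∂P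
      = C2.toReal := by
    have hFm : AEStronglyMeasurable
        (fun ω => ∫ w in Set.Ioc (0:ℝ) x, Real.exp (2 * (W w ω + r * w))) P := by
      have : Measurable fun p : Ω × ℝ => Real.exp (2 * (W p.2 p.1 + r * p.2)) :=
        (((hW.measurable.comp measurable_swap).add
          ((measurable_snd).const_mul r)).const_mul 2).exp
      exact this.stronglyMeasurable.integral_prod_right'.aestronglyMeasurable
    rw [integral_eq_lintegral_of_nonneg_ae
      (Filter.Eventually.of_forall fun ω => integral_nonneg fun w => Real.exp_nonneg _) hFm]
    congr 1
    rw [← hswapF]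
    refine lintegral_congr_ae ?_
    filter_upwards [hW.cont] with ω hc
    have hcont : Continuous fun w : ℝ => Real.exp (2 * (W w ω + r * w)) :=
      Real.continuous_exp.comp
        (continuous_const.mul (hc.add (continuous_const.mul continuous_id)))
    have hint : IntegrableOn (fun w => Real.exp (2 * (W w ω + r * w)))
        (Set.Ioc (0:ℝ) x) volume :=
      (hcont.integrableOn_Icc).mono_set Set.Ioc_subset_Icc_self
    rw [← ofReal_integral_eq_lintegral_ofReal hint
      (Filter.Eventually.of_forall fun w => Real.exp_nonneg _)]
  -- norm of the complex exponential prefactor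
  have hnorm1 : ‖Complex.exp (-(x : ℂ) * ν ^ 2 / 2)‖
      = Real.exp (x * (ν.im ^ 2 - r ^ 2) / 2) := by
    rw [Complex.norm_exp]
    congr 1
    have : -(x : ℂ) * ν ^ 2 / 2 = ((-(x / 2) : ℝ) : ℂ) * ν ^ 2 := by
      push_cast; ring
    rw [this, Complex.re_ofReal_mul]
    have : (ν ^ 2).re = r ^ 2 - ν.im ^ 2 := by
      simp [pow_two, Complex.mul_re, hr]
    rw [this]
    ring
  -- the integrand norm
  have hnormf : ∀ ω, ‖((max (N ω - a) 0 : ℝ) : ℂ) * Complex.exp (ν * (W x ω : ℂ))‖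
      = max (N ω - a) 0 * Real.exp (r * W x ω) := by
    intro ω
    rw [norm_mul, Complex.norm_real, Real.norm_eq_abs,
      Complex.norm_exp]
    congr 1
    · exact abs_of_nonneg (le_max_right _ _)
    · congr 1
      simp [Complex.mul_re, hr]
  -- bound the integral of norms via lintegral
  have hmeasg : AEStronglyMeasurable (fun ω => max (N ω - a) 0 * Real.exp (r * W x ω)) P := by
    refine (Measurable.mul ?_ ?_).aestronglyMeasurable
    · exact (hNm.measurable.sub measurable_const).max measurable_const
    · exact ((Wm x).const_mul r).exp
  have hgle : ∫ ω, max (N ω - a) 0 * Real.exp (r * W x ω) ∂P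
      ≤ Real.exp (r ^ 2 * x / 2) * C2.toReal := by
    rw [integral_eq_lintegral_of_nonneg_ae
      (Filter.Eventually.of_forall fun ω =>
        mul_nonneg (le_max_right _ _) (Real.exp_nonneg _)) hmeasg]
    have step1 : ∫⁻ ω, ENNReal.ofReal (max (N ω - a) 0 * Real.exp (r * W x ω)) ∂P
        ≤ ∫⁻ ω, ENNReal.ofReal (N ω * Real.exp (r * W x ω)) ∂P := by
      refine lintegral_mono fun ω => ENNReal.ofReal_le_ofReal ?_
      have h1 : max (N ω - a) 0 ≤ N ω := max_le (by linarith [hNnn ω]) (hNnn ω)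
      exact mul_le_mul_of_nonneg_right h1 (Real.exp_nonneg _)
    have step2 : ∫⁻ ω, ENNReal.ofReal (N ω * Real.exp (r * W x ω)) ∂P
        = ENNReal.ofReal (Real.exp (r ^ 2 * x / 2)) * C2 := by
      rw [← hswapG]
      refine lintegral_congr_ae ?_
      filter_upwards [hW.cont] with ω hc
      have hcont : Continuous fun w : ℝ => Real.exp (2 * W w ω + r * W x ω) :=
        Real.continuous_exp.comp
          ((continuous_const.mul hc).add continuous_const)
      have hint : IntegrableOn (fun w => Real.exp (2 * W w ω + r * W x ω))
          (Set.Ioc (0:ℝ) x) volume :=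
        (hcont.integrableOn_Icc).mono_set Set.Ioc_subset_Icc_self
      have key : N ω * Real.exp (r * W x ω)
          = ∫ w in Set.Ioc (0:ℝ) x, Real.exp (2 * W w ω + r * W x ω) := by
        simp_rw [Real.exp_add]
        rw [hN, ← integral_mul_const]
      rw [key, ofReal_integral_eq_lintegral_ofReal hint
        (Filter.Eventually.of_forall fun w => Real.exp_nonneg _)]
    calc (∫⁻ ω, ENNReal.ofReal (max (N ω - a) 0 * Real.exp (r * W x ω)) ∂P).toReal
        ≤ (ENNReal.ofReal (Real.exp (r ^ 2 * x / 2)) * C2).toReal := by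
          refine ENNReal.toReal_mono ?_ (step1.trans_eq step2)
          exact ENNReal.mul_ne_top ENNReal.ofReal_ne_top hC2top
      _ = Real.exp (r ^ 2 * x / 2) * C2.toReal := by
          rw [ENNReal.toReal_mul, ENNReal.toReal_ofReal (Real.exp_nonneg _)]
  -- assemble
  rw [hRHS, norm_mul, hnorm1]
  have hIle : ‖∫ ω, ((max (N ω - a) 0 : ℝ) : ℂ) * Complex.exp (ν * (W x ω : ℂ)) ∂P‖
      ≤ Real.exp (r ^ 2 * x / 2) * C2.toReal := by
    refine le_trans (norm_integral_le_integral_norm _) ?_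
    refine le_trans (le_of_eq (integral_congr_ae
      (Filter.Eventually.of_forall fun ω => hnormf ω))) hgle
  calc Real.exp (x * (ν.im ^ 2 - r ^ 2) / 2)
        * ‖∫ ω, ((max (N ω - a) 0 : ℝ) : ℂ) * Complex.exp (ν * (W x ω : ℂ)) ∂P‖
      ≤ Real.exp (x * (ν.im ^ 2 - r ^ 2) / 2) * (Real.exp (r ^ 2 * x / 2) * C2.toReal) := by
        exact mul_le_mul_of_nonneg_left hIle (Real.exp_nonneg _)
    _ = Real.exp ((x / 2) * ν.im ^ 2) * C2.toReal := by
        rw [← mul_assoc, ← Real.exp_add]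
        congr 2
        ring
end
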